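/- Let X be a Banach space and T : X → X a bounded linear operator. Then inf{ ‖T − B‖ : B ∈ L(X) of finite rank } ≤ 3 · inf{ ‖T* − C‖ : C ∈ L(X*) of finite rank }, where T* : X* → X* is the adjoint of T. -/

import Mathlib

set_option maxHeartbeats 4000000

open NormedSpace RCLike

noncomputable instance bidualNormedAddCommGroup {𝕜 X : Type*} [RCLike 𝕜] [NormedAddCommGroup X]
    [NormedSpace 𝕜 X] : NormedAddCommGroup (StrongDual 𝕜 (StrongDual 𝕜 X)) :=
  ContinuousLinearMap.toNormedAddCommGroup

noncomputable instance bidualNormedSpace {𝕜 X : Type*} [RCLike 𝕜] [NormedAddCommGroup X]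
    [NormedSpace 𝕜 X] : NormedSpace 𝕜 (StrongDual 𝕜 (StrongDual 𝕜 X)) :=
  ContinuousLinearMap.toNormedSpace

section Transfer

variable {𝕜 X : Type*} [RCLike 𝕜] [NormedAddCommGroup X] [NormedSpace 𝕜 X]

/-- A real functional nearly attains its norm on the unit ball. -/
lemma exists_norming [NormedSpace ℝ X] (μ : X →L[ℝ] ℝ) {c : ℝ} (hc : c < ‖μ‖) :
    ∃ z : X, ‖z‖ ≤ 1 ∧ c < μ z := by
  by_contra hcon
  push_neg at hcon
  have h0 : 0 ≤ c := by simpa using hcon 0 (by simp)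
  have hb : ‖μ‖ ≤ c := by
    refine μ.opNorm_le_bound h0 (fun x => ?_)
    rcases eq_or_ne x 0 with rfl | hx
    · simp
    · have hxn : (0:ℝ) < ‖x‖ := norm_pos_iff.2 hx
      have h1 : μ (‖x‖⁻¹ • x) ≤ c := hcon _ (by
        rw [norm_smul, norm_inv, norm_norm]
        exact le_of_eq (inv_mul_cancel₀ hxn.ne'))
      have h2 : μ (-(‖x‖⁻¹ • x)) ≤ c := hcon _ (by
        rw [norm_neg, norm_smul, norm_inv, norm_norm]
        exact le_of_eq (inv_mul_cancel₀ hxn.ne'))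
      have h1' : ‖x‖⁻¹ * μ x ≤ c := by simpa using h1
      have h2' : -(‖x‖⁻¹ * μ x) ≤ c := by simpa using h2
      have : |‖x‖⁻¹ * μ x| ≤ c := abs_le.2 ⟨by linarith, h1'⟩
      rw [abs_mul, abs_of_nonneg (inv_nonneg.2 hxn.le)] at this
      have := mul_le_mul_of_nonneg_left this hxn.le
      rw [← mul_assoc, mul_inv_cancel₀ hxn.ne', one_mul] at this
      calc ‖μ x‖ = |μ x| := rfl
        _ ≤ ‖x‖ * c := this
        _ = c * ‖x‖ := mul_comm _ _
  exact absurd hc (not_lt.2 hb)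

/-- Transfer principle: finitely many ball constraints (centres in `X`) on linear
combinations of unknowns which admit a solution in the bidual admit an approximate
solution in `X`. -/
theorem transfer [NormedSpace ℝ X] [IsScalarTower ℝ 𝕜 X] [SMulCommClass ℝ 𝕜 X]
    {ι σ : Type*} [Fintype ι] [Fintype σ]
    (ψ : σ → StrongDual 𝕜 (StrongDual 𝕜 X)) (a : ι → σ → 𝕜) (y : ι → X) (r : ι → ℝ)
    (h : ∀ j, ‖(∑ s, a j s • ψ s) - inclusionInDoubleDualLi 𝕜 (y j)‖ ≤ r j)
    {ε : ℝ} (hε : 0 < ε) :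
    ∃ x : σ → X, ∀ j, ‖(∑ s, a j s • x s) - y j‖ < r j + ε := by
  classical
  by_contra hcon
  push_neg at hcon
  have hr0 : ∀ j, 0 ≤ r j := fun j => le_trans (norm_nonneg ((∑ s, a j s • ψ s) - inclusionInDoubleDualLi 𝕜 (y j))) (h j)
  set J : X →ₗᵢ[𝕜] StrongDual 𝕜 (StrongDual 𝕜 X) := inclusionInDoubleDualLi 𝕜 with hJdef
  set Φ : (σ → X) → (ι → X) := fun x => fun j => (∑ s, a j s • x s) - y j with hΦ
  set V : Set (ι → X) := {z | ∀ j, ‖z j‖ < r j + ε} with hV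
  -- V is open
  have hVopen : IsOpen V := by
    have : V = ⋂ j, {z : ι → X | ‖z j‖ < r j + ε} := by
      ext z; simp [hV, Set.mem_iInter]
    rw [this]
    exact isOpen_iInter_of_finite fun j =>
      isOpen_lt ((continuous_apply j).norm) continuous_const
  -- V is convex
  have hVconv : Convex ℝ V := by
    intro z hz w hw α β hα hβ hαβ
    intro j
    have hzj := hz j
    have hwj := hw j
    have : ‖(α • z + β • w) j‖ ≤ α * ‖z j‖ + β * ‖w j‖ := by
      calc ‖(α • z + β • w) j‖ = ‖α • z j + β • w j‖ := by simp
        _ ≤ ‖α • z j‖ + ‖β • w j‖ := norm_add_le _ _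
        _ = α * ‖z j‖ + β * ‖w j‖ := by
            rw [norm_smul, norm_smul, Real.norm_eq_abs, Real.norm_eq_abs,
              abs_of_nonneg hα, abs_of_nonneg hβ]
    rcases eq_or_lt_of_le hα with hα0 | hαpos
    · have hβ1 : β = 1 := by linarith
      refine lt_of_le_of_lt this ?_
      rw [← hα0, hβ1]; simpa using hwj
    · refine lt_of_le_of_lt this ?_
      have hc' : α*(r j+ε) + β*(r j+ε) = r j + ε := by rw [← add_mul, hαβ, one_mul]
      have p1 : α*‖z j‖ < α*(r j+ε) := mul_lt_mul_of_pos_left hzj hαpos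
      have p2 : β*‖w j‖ ≤ β*(r j+ε) := mul_le_mul_of_nonneg_left hwj.le hβ
      linarith
  -- range Φ is convex
  have hAconv : Convex ℝ (Set.range Φ) := by
    rintro _ ⟨x, rfl⟩ _ ⟨x', rfl⟩ α β hα hβ hαβ
    refine ⟨α • x + β • x', ?_⟩
    funext j
    have hsum : (∑ s, a j s • (α • x s + β • x' s))
        = α • (∑ s, a j s • x s) + β • (∑ s, a j s • x' s) := by
      rw [Finset.smul_sum, Finset.smul_sum, ← Finset.sum_add_distrib]
      refine Finset.sum_congr rfl fun s _ => ?_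
      rw [smul_add, smul_comm (a j s) α, smul_comm (a j s) β]
    show (∑ s, a j s • (α • x s + β • x' s)) - y j
        = (α • Φ x + β • Φ x') j
    rw [hsum]
    have : (α • Φ x + β • Φ x') j
        = α • ((∑ s, a j s • x s) - y j) + β • ((∑ s, a j s • x' s) - y j) := by
      simp [hΦ]
    have hy : α • y j + β • y j = y j := by
      rw [← add_smul, hαβ, one_smul]
    rw [this, smul_sub, smul_sub,
      show α • (∑ s, a j s • x s) - α • y j + (β • (∑ s, a j s • x' s) - β • y j)
        = α • (∑ s, a j s • x s) + β • (∑ s, a j s • x' s) - (α • y j + β • y j) from by abel,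
      hy]
  -- disjoint
  have hdisj : Disjoint V (Set.range Φ) := by
    rw [Set.disjoint_left]
    rintro z hzV ⟨x, rfl⟩
    obtain ⟨j, hj⟩ := hcon x
    exact absurd (hzV j) (not_lt.2 hj)
  obtain ⟨f, u, hfV, hfA⟩ := _root_.geometric_hahn_banach_open hVconv hVopen hAconv hdisj
  -- coordinate functionals
  set sing : ι → (X →L[ℝ] (ι → X)) := fun j =>
    ContinuousLinearMap.pi (fun i => if i = j then ContinuousLinearMap.id ℝ X else 0)
    with hsing
  have hsing_apply : ∀ j (v : X) (i : ι), sing j v i = if i = j then v else 0 := by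
    intro j v i
    simp [hsing, ContinuousLinearMap.pi_apply]
    split <;> simp
  set μ : ι → (X →L[ℝ] ℝ) := fun j => f.comp (sing j) with hμ
  have hsum : ∀ z : ι → X, f z = ∑ j, μ j (z j) := by
    intro z
    have hzdec : z = ∑ j, sing j (z j) := by
      funext i
      rw [Finset.sum_apply]
      rw [Finset.sum_congr rfl (fun j _ => hsing_apply j (z j) i)]
      simp
    conv_lhs => rw [hzdec]
    rw [map_sum]
    rfl
  -- V contains 0
  have h0V : (0 : ι → X) ∈ V := by
    intro j; simp only [Pi.zero_apply, norm_zero]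
    exact add_pos_of_nonneg_of_pos (hr0 j) hε
  -- linear part vanishes
  set c0 : ℝ := ∑ j, μ j (y j) with hc0
  set L : (σ → X) → ℝ := fun x => ∑ j, μ j (∑ s, a j s • x s) with hL
  have hfΦ : ∀ x, f (Φ x) = L x - c0 := by
    intro x
    rw [hsum]
    simp only [hΦ, hL, hc0, map_sub]
    rw [Finset.sum_sub_distrib]
  have hLlb : ∀ x, u + c0 ≤ L x := by
    intro x
    have := hfA (Φ x) ⟨x, rfl⟩
    rw [hfΦ] at this
    linarith
  have hLsmul : ∀ (t : ℝ) x, L (t • x) = t * L x := by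
    intro t x
    simp only [hL]
    rw [Finset.mul_sum]
    refine Finset.sum_congr rfl fun j _ => ?_
    have : (∑ s, a j s • (t • x) s) = t • (∑ s, a j s • x s) := by
      rw [Finset.smul_sum]
      exact Finset.sum_congr rfl fun s _ => by
        simp only [Pi.smul_apply]
        rw [smul_comm]
    rw [this, map_smul]
    rfl
  have hL0 : ∀ x, L x = 0 := by
    intro x
    by_contra hLx
    have h1 := hLlb (((u + c0 - 1) / L x) • x)
    rw [hLsmul, div_mul_cancel₀ _ hLx] at h1
    linarith
  have hs0 : ∀ (s0 : σ) (v : X), ∑ j, μ j (a j s0 • v) = 0 := by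
    intro s0 v
    have hx := hL0 (Pi.single s0 v : σ → X)
    simp only [hL] at hx
    have hinner : ∀ j : ι, (∑ s, a j s • Pi.single s0 v s) = a j s0 • v := by
      intro j
      have hterm : ∀ s : σ, a j s • (Pi.single s0 v : σ → X) s
          = if s = s0 then a j s0 • v else 0 := by
        intro s
        rcases eq_or_ne s s0 with rfl | hne
        · simp
        · simp [Pi.single_apply, hne]
      calc (∑ s, a j s • (Pi.single s0 v : σ → X) s)
          = ∑ s, if s = s0 then a j s0 • v else 0 :=
            Finset.sum_congr rfl (fun s _ => hterm s)
        _ = a j s0 • v := by simp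
    rw [← hx]
    exact (Finset.sum_congr rfl fun j _ => by rw [hinner j]).symm
  -- complexify
  set w : ι → (StrongDual 𝕜 X) := fun j => (μ j).extendTo𝕜' with hw
  have hre : ∀ j (v : X), re ((w j) v) = μ j v := by
    intro j v
    exact LinearMap.extendTo𝕜'_apply_re ((μ j) : X →ₗ[ℝ] ℝ) v
  have hwnorm : ∀ j, ‖w j‖ = ‖μ j‖ := fun j => ContinuousLinearMap.norm_extendTo𝕜' (μ j)
  have hv0 : ∀ s0 : σ, (∑ j, a j s0 • w j) = (0 : StrongDual 𝕜 X) := by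
    intro s0
    set g : StrongDual 𝕜 X := ∑ j, a j s0 • w j with hg
    have hgre : ∀ v : X, re (g v) = 0 := by
      intro v
      have : g v = ∑ j, (w j) (a j s0 • v) := by
        rw [hg, ContinuousLinearMap.sum_apply]
        refine Finset.sum_congr rfl fun j _ => ?_
        rw [ContinuousLinearMap.smul_apply, map_smul, smul_eq_mul]
      rw [this, map_sum]
      rw [Finset.sum_congr rfl (fun j _ => hre j (a j s0 • v))]
      exact hs0 s0 v
    ext v
    have h1 := hgre ((starRingEnd 𝕜 (g v)) • v)
    rw [map_smul, smul_eq_mul, mul_comm, RCLike.mul_conj] at h1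
    have h2 : ((‖g v‖ : 𝕜) ^ 2) = ((‖g v‖ ^ 2 : ℝ) : 𝕜) := by push_cast; ring
    rw [h2, RCLike.ofReal_re] at h1
    have : ‖g v‖ = 0 := by
      have := sq_eq_zero_iff.mp h1
      exact this
    simpa using norm_eq_zero.mp this
  -- key identity
  have hψ0 : (∑ j, ((∑ s, a j s • ψ s) : StrongDual 𝕜 (StrongDual 𝕜 X)) (w j)) = 0 := by
    have : ∀ j, ((∑ s, a j s • ψ s) : StrongDual 𝕜 (StrongDual 𝕜 X)) (w j)
        = ∑ s, a j s • (ψ s (w j)) := by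
      intro j
      rw [ContinuousLinearMap.sum_apply]
      exact Finset.sum_congr rfl fun s _ => rfl
    rw [Finset.sum_congr rfl fun j _ => this j]
    rw [Finset.sum_comm]
    have : ∀ s : σ, (∑ j, a j s • (ψ s (w j))) = ψ s (∑ j, a j s • w j) := by
      intro s
      rw [map_sum]
      exact Finset.sum_congr rfl fun j _ => (map_smul (ψ s) (a j s) (w j)).symm
    rw [Finset.sum_congr rfl fun s _ => this s]
    rw [Finset.sum_congr rfl fun s _ => by rw [hv0 s, map_zero]]
    simp
  -- claim 1 : S ≤ u
  set S : ℝ := ∑ j, (r j + ε) * ‖μ j‖ with hS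
  have hS0 : 0 ≤ S := Finset.sum_nonneg fun j _ =>
    mul_nonneg (by linarith [hr0 j]) (norm_nonneg _)
  have hθ : ∀ θ : ℝ, 0 < θ → θ < 1 → θ ^ 2 * S < u := by
    intro θ hθ0 hθ1
    have hz : ∀ j, ∃ z : X, ‖z‖ ≤ 1 ∧ θ * ‖μ j‖ ≤ μ j z := by
      intro j
      rcases eq_or_lt_of_le (norm_nonneg (μ j)) with h0 | hpos
      · exact ⟨0, by simp, by rw [← h0]; simp⟩
      · obtain ⟨z, hz1, hz2⟩ := exists_norming (μ j)
          (mul_lt_of_lt_one_left hpos hθ1)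
        exact ⟨z, hz1, hz2.le⟩
    choose z hz1 hz2 using hz
    set v : ι → X := fun j => (θ * (r j + ε)) • z j with hvdef
    have hvV : v ∈ V := by
      intro j
      rw [hvdef]
      simp only
      rw [norm_smul, Real.norm_eq_abs,
        abs_of_nonneg (mul_nonneg hθ0.le (by linarith [hr0 j]))]
      have h1 : θ * (r j + ε) * ‖z j‖ ≤ θ * (r j + ε) * 1 :=
        mul_le_mul_of_nonneg_left (hz1 j) (mul_nonneg hθ0.le (by linarith [hr0 j]))
      have h2 : θ * (r j + ε) < r j + ε :=
        mul_lt_of_lt_one_left (by linarith [hr0 j]) hθ1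
      linarith
    have hfv := hfV v hvV
    rw [hsum] at hfv
    have : θ ^ 2 * S ≤ ∑ j, μ j (v j) := by
      rw [hS, Finset.mul_sum]
      refine Finset.sum_le_sum fun j _ => ?_
      have : μ j (v j) = (θ * (r j + ε)) * μ j (z j) := by
        rw [hvdef]; simp only; rw [map_smul]; rfl
      rw [this]
      have hmul := mul_le_mul_of_nonneg_left (hz2 j)
        (mul_nonneg hθ0.le (show (0:ℝ) ≤ r j + ε by linarith [hr0 j]))
      calc θ ^ 2 * ((r j + ε) * ‖μ j‖) = θ * (r j + ε) * (θ * ‖μ j‖) := by ring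
        _ ≤ θ * (r j + ε) * ((μ j) (z j)) := hmul
    linarith
  have hSu : S ≤ u := by
    by_contra hus
    push_neg at hus
    have hu0 : 0 ≤ u := by
      have h14 := hθ (1/2) (by norm_num) (by norm_num)
      have h15 : (0:ℝ) ≤ (1/2:ℝ)^2 * S := mul_nonneg (by norm_num) hS0
      linarith
    have hSpos : 0 < S := lt_of_le_of_lt hu0 hus
    set θ := Real.sqrt ((u + S) / (2 * S)) with hθdef
    have hfrac0 : 0 < (u + S) / (2 * S) := div_pos (by linarith) (by linarith)
    have hfrac1 : (u + S) / (2 * S) < 1 := by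
      rw [div_lt_one (by positivity)]; linarith
    have hθ0 : 0 < θ := Real.sqrt_pos.2 hfrac0
    have hθ1 : θ < 1 := by
      rw [hθdef]
      have := Real.sqrt_lt_sqrt hfrac0.le hfrac1
      simpa using this
    have hθsq : θ ^ 2 = (u + S) / (2 * S) := Real.sq_sqrt hfrac0.le
    have hlt := hθ θ hθ0 hθ1
    have heq : θ ^ 2 * S = (u + S) / 2 := by
      rw [hθsq]
      field_simp
    rw [heq] at hlt
    linarith
  -- claim 2 : u ≤ -c0
  have huc0 : u ≤ -c0 := by
    have := hfA (Φ 0) ⟨0, rfl⟩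
    rw [hfΦ, hL] at this
    simp only [Pi.zero_apply, smul_zero, Finset.sum_const_zero, map_zero] at this
    simpa using this
  -- claim 3 : -c0 ≤ ∑ r j * ‖μ j‖
  have hc0b : -c0 ≤ ∑ j, r j * ‖μ j‖ := by
    have hkey : -c0 = ∑ j, re (((∑ s, a j s • ψ s) - J (y j)) (w j)) := by
      have : ∀ j, re ((((∑ s, a j s • ψ s) : StrongDual 𝕜 (StrongDual 𝕜 X)) - J (y j)) (w j))
          = re (((∑ s, a j s • ψ s) : StrongDual 𝕜 (StrongDual 𝕜 X)) (w j)) - μ j (y j) := by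
        intro j
        rw [ContinuousLinearMap.sub_apply, map_sub]
        congr 1
        have : (J (y j) : StrongDual 𝕜 (StrongDual 𝕜 X)) (w j) = (w j) (y j) := rfl
        rw [this, hre]
      rw [Finset.sum_congr rfl fun j _ => this j, Finset.sum_sub_distrib]
      rw [← map_sum, hψ0]
      simp [hc0]
    rw [hkey]
    refine Finset.sum_le_sum fun j _ => ?_
    calc re (((∑ s, a j s • ψ s) - J (y j)) (w j))
        ≤ ‖(((∑ s, a j s • ψ s) - J (y j)) (w j))‖ := RCLike.re_le_norm _
      _ ≤ ‖(∑ s, a j s • ψ s) - J (y j)‖ * ‖w j‖ := ContinuousLinearMap.le_opNorm _ _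
      _ ≤ r j * ‖μ j‖ := by
          rw [hwnorm]
          exact mul_le_mul_of_nonneg_right (h j) (norm_nonneg _)
  -- contradiction
  have hfin : ε * ∑ j, ‖μ j‖ ≤ 0 := by
    have h1 : S ≤ ∑ j, r j * ‖μ j‖ := le_trans hSu (le_trans huc0 hc0b)
    have h2 : S = (∑ j, r j * ‖μ j‖) + ε * ∑ j, ‖μ j‖ := by
      rw [hS, Finset.mul_sum, ← Finset.sum_add_distrib]
      exact Finset.sum_congr rfl fun j _ => by ring
    linarith
  have hμ0 : ∀ j, μ j = 0 := by
    intro j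
    have hnn : ∀ j ∈ Finset.univ, (0:ℝ) ≤ ‖μ (j:ι)‖ := fun j _ => norm_nonneg _
    have hsum0 : (∑ j, ‖μ j‖) = 0 := by
      have h1 : 0 ≤ ∑ j, ‖μ j‖ := Finset.sum_nonneg hnn
      have h2 : ε * (∑ j, ‖μ j‖) ≤ ε * 0 := by simpa using hfin
      have h3 : (∑ j, ‖μ j‖) ≤ 0 := le_of_mul_le_mul_left h2 hε
      linarith
    have := (Finset.sum_eq_zero_iff_of_nonneg hnn).mp hsum0 j (Finset.mem_univ j)
    exact norm_eq_zero.mp this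
  have hf0 : ∀ z, f z = 0 := by
    intro z
    rw [hsum]
    simp [hμ0]
  have h1 := hfV 0 h0V
  have h2 := hfA (Φ 0) ⟨0, rfl⟩
  rw [hf0] at h1
  rw [hf0] at h2
  linarith

end Transfer

section TransferW

open NormedSpace

variable {𝕜 X : Type*} [RCLike 𝕜] [NormedAddCommGroup X] [NormedSpace 𝕜 X]

theorem transfer' {ι σ : Type*} [Fintype ι] [Fintype σ]
    (ψ : σ → StrongDual 𝕜 (StrongDual 𝕜 X)) (a : ι → σ → 𝕜) (y : ι → X) (r : ι → ℝ)
    (h : ∀ j, ‖(∑ s, a j s • ψ s) - inclusionInDoubleDualLi 𝕜 (y j)‖ ≤ r j)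
    {ε : ℝ} (hε : 0 < ε) :
    ∃ x : σ → X, ∀ j, ‖(∑ s, a j s • x s) - y j‖ < r j + ε := by
  letI iN : NormedSpace ℝ X := NormedSpace.restrictScalars ℝ 𝕜 X
  have hsm : ∀ (t : ℝ) (v : X), t • v = (algebraMap ℝ 𝕜 t) • v := fun _ _ => rfl
  letI iT : IsScalarTower ℝ 𝕜 X := ⟨fun t a v => by rw [hsm, Algebra.smul_def, mul_smul]⟩
  letI iC : SMulCommClass ℝ 𝕜 X := ⟨fun t a v => by rw [hsm, hsm, smul_comm]⟩
  exact transfer ψ a y r h hε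

end TransferW

section Main

open NormedSpace

variable {𝕜 X : Type*} [RCLike 𝕜] [NormedAddCommGroup X] [NormedSpace 𝕜 X]

theorem main_approx (T : X →L[𝕜] X) (C : StrongDual 𝕜 X →L[𝕜] StrongDual 𝕜 X)
    (hC : FiniteDimensional 𝕜 (LinearMap.range (C : StrongDual 𝕜 X →ₗ[𝕜] StrongDual 𝕜 X)))
    {ε : ℝ} (hε : 0 < ε) :
    ∃ B : X →L[𝕜] X, FiniteDimensional 𝕜 (LinearMap.range (B : X →ₗ[𝕜] X)) ∧
      ‖T - B‖ ≤ 3 * ‖(ContinuousLinearMap.compL 𝕜 X X 𝕜).flip T - C‖ + ε := by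
  classical
  haveI := hC
  set J : X →ₗᵢ[𝕜] StrongDual 𝕜 (StrongDual 𝕜 X) := inclusionInDoubleDualLi 𝕜 with hJdef
  set Tadj : StrongDual 𝕜 X →L[𝕜] StrongDual 𝕜 X := (ContinuousLinearMap.compL 𝕜 X X 𝕜).flip T with hTadj
  set d : ℝ := ‖Tadj - C‖ with hd
  have hd0 : 0 ≤ d := norm_nonneg (Tadj - C)
  set F : Submodule 𝕜 (StrongDual 𝕜 X) := LinearMap.range (C : StrongDual 𝕜 X →ₗ[𝕜] StrongDual 𝕜 X) with hF
  set n : ℕ := Module.finrank 𝕜 F with hn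
  haveI : Module.Free 𝕜 F := Module.Free.of_divisionRing 𝕜 F
  set b : Module.Basis (Fin n) 𝕜 F := Module.finBasis 𝕜 F with hb
  set fs : Fin n → StrongDual 𝕜 X := fun s => (b s : StrongDual 𝕜 X) with hfs
  have hmem : ∀ g : StrongDual 𝕜 X, C g ∈ F := fun g => LinearMap.mem_range_self _ g
  set Cr : StrongDual 𝕜 X →L[𝕜] F := C.codRestrict F hmem with hCr
  set ψ : Fin n → StrongDual 𝕜 (StrongDual 𝕜 X) :=
    fun s => (LinearMap.toContinuousLinearMap (E := F) (F' := 𝕜) (b.coord s)).comp Cr with hψ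
  have hψg : ∀ (s : Fin n) (g : StrongDual 𝕜 X), ψ s g = b.repr (Cr g) s := by
    intro s g
    simp only [hψ, ContinuousLinearMap.comp_apply, LinearMap.coe_toContinuousLinearMap',
      Module.Basis.coord_apply]
  have hCg : ∀ g : StrongDual 𝕜 X, C g = ∑ s, ψ s g • fs s := by
    intro g
    have h1 : ((Cr g : F) : StrongDual 𝕜 X) = C g :=
      ContinuousLinearMap.coe_codRestrict_apply _ _ _ g
    have h2 := b.sum_repr (Cr g)
    calc C g = ((Cr g : F) : StrongDual 𝕜 X) := h1.symm
      _ = ((∑ s, b.repr (Cr g) s • b s : F) : StrongDual 𝕜 X) := by rw [h2]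
      _ = ∑ s, b.repr (Cr g) s • fs s := by
          rw [Submodule.coe_sum]
          exact Finset.sum_congr rfl fun s _ => by rw [Submodule.coe_smul]
      _ = ∑ s, ψ s g • fs s := Finset.sum_congr rfl fun s _ => by rw [hψg]
  -- key estimate
  have key : ∀ x : X, ‖(∑ s, (fs s x) • ψ s) - J (T x)‖ ≤ d * ‖x‖ := by
    intro x
    refine ContinuousLinearMap.opNorm_le_bound _ (mul_nonneg hd0 (norm_nonneg x))
      (fun g => ?_)
    have h1 : ((∑ s, (fs s x) • ψ s) : StrongDual 𝕜 (StrongDual 𝕜 X)) g = ∑ s, fs s x * ψ s g := by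
      rw [ContinuousLinearMap.sum_apply]
      exact Finset.sum_congr rfl fun s _ => rfl
    have h2 : (C g) x = ∑ s, fs s x * ψ s g := by
      rw [hCg g, ContinuousLinearMap.sum_apply]
      exact Finset.sum_congr rfl fun s _ => by
        rw [ContinuousLinearMap.smul_apply, smul_eq_mul, mul_comm]
    have h3 : (Tadj g) x = g (T x) := rfl
    have hval : ((∑ s, (fs s x) • ψ s) - J (T x)) g = ((C - Tadj) g) x := by
      rw [ContinuousLinearMap.sub_apply, h1, ← h2]
      rw [ContinuousLinearMap.sub_apply, ContinuousLinearMap.sub_apply, h3]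
      rfl
    rw [hval]
    have hCd : ‖C - Tadj‖ = d := by rw [hd]; exact norm_sub_rev C Tadj
    calc ‖((C - Tadj) g) x‖ ≤ ‖(C - Tadj) g‖ * ‖x‖ := ContinuousLinearMap.le_opNorm _ _
      _ ≤ ‖C - Tadj‖ * ‖g‖ * ‖x‖ :=
          mul_le_mul_of_nonneg_right (ContinuousLinearMap.le_opNorm _ _) (norm_nonneg _)
      _ = d * ‖x‖ * ‖g‖ := by rw [hCd]; ring
  -- numerics
  set ε1 : ℝ := min (ε/2) 1 with hε1def
  have hε1 : 0 < ε1 := lt_min (by linarith) one_pos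
  have hε1le : ε1 ≤ 1 := min_le_right _ _
  have hε1le2 : ε1 ≤ ε/2 := min_le_left _ _
  set Sψ : ℝ := ∑ s, ‖ψ s‖ with hSψ
  have hSψ0 : 0 ≤ Sψ := Finset.sum_nonneg fun s _ => norm_nonneg (ψ s)
  set δ : ℝ := ε1 / (2*Sψ + n + 1) with hδdef
  have hden : (0:ℝ) < 2*Sψ + n + 1 :=
    add_pos_of_nonneg_of_pos
      (add_nonneg (mul_nonneg (by norm_num) hSψ0) (Nat.cast_nonneg n)) one_pos
  have hδ : 0 < δ := div_pos hε1 hden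
  -- the net
  set A : Set (Fin n → 𝕜) := (fun z : X => fun s => fs s z) '' Metric.closedBall 0 1 with hA
  set R : ℝ := ∑ s, ‖fs s‖ with hR
  have hR0 : 0 ≤ R := Finset.sum_nonneg fun s _ => norm_nonneg (fs s)
  have hAsub : A ⊆ Metric.closedBall 0 R := by
    rintro _ ⟨z, hz, rfl⟩
    rw [Metric.mem_closedBall, dist_zero_right]
    refine (pi_norm_le_iff_of_nonneg hR0).2 fun s => ?_
    have hz1 : ‖z‖ ≤ 1 := by
      simpa [Metric.mem_closedBall, dist_zero_right] using hz
    calc ‖fs s z‖ ≤ ‖fs s‖ * ‖z‖ := ContinuousLinearMap.le_opNorm _ _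
      _ ≤ ‖fs s‖ * 1 := mul_le_mul_of_nonneg_left hz1 (norm_nonneg _)
      _ ≤ R := by
          rw [mul_one]
          exact Finset.single_le_sum (f := fun s => ‖fs s‖)
            (fun s _ => norm_nonneg (fs s)) (Finset.mem_univ s)
  have hTBd : TotallyBounded A :=
    TotallyBounded.subset hAsub (isCompact_closedBall (0 : Fin n → 𝕜) R).totallyBounded
  obtain ⟨tn, htsub, htfin, htcover⟩ :=
    totallyBounded_iff_subset.mp hTBd _ (Metric.dist_mem_uniformity hδ)
  haveI : Fintype tn := htfin.fintype
  have hchoice : ∀ p : tn, ∃ z : X,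
      z ∈ Metric.closedBall (0:X) 1 ∧ (fun s => fs s z) = (p : Fin n → 𝕜) := by
    intro p
    obtain ⟨z, hz, hzp⟩ := htsub p.2
    exact ⟨z, hz, hzp⟩
  choose xa hxa1 hxa2 using hchoice
  have hxa1' : ∀ p : tn, ‖xa p‖ ≤ 1 := by
    intro p
    have := hxa1 p
    simpa [Metric.mem_closedBall, dist_zero_right] using this
  -- rows
  set arows : (tn ⊕ Fin n) → Fin n → 𝕜 :=
    Sum.elim (fun p s => fs s (xa p)) (fun s0 s => if s = s0 then 1 else 0) with harows
  set yrows : (tn ⊕ Fin n) → X := Sum.elim (fun p => T (xa p)) (fun _ => 0) with hyrows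
  set rrows : (tn ⊕ Fin n) → ℝ := Sum.elim (fun _ => d) (fun s0 => ‖ψ s0‖) with hrrows
  have hwitness : ∀ j, ‖(∑ s, arows j s • ψ s) - J (yrows j)‖ ≤ rrows j := by
    rintro (p | s0)
    · simp only [harows, hyrows, hrrows, Sum.elim_inl]
      calc ‖(∑ s, fs s (xa p) • ψ s) - J (T (xa p))‖ ≤ d * ‖xa p‖ := key (xa p)
        _ ≤ d := mul_le_of_le_one_right hd0 (hxa1' p)
    · simp only [harows, hyrows, hrrows, Sum.elim_inr]
      have hsum1 : (∑ s, (if s = s0 then (1:𝕜) else 0) • ψ s) = ψ s0 := by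
        calc (∑ s, (if s = s0 then (1:𝕜) else 0) • ψ s)
            = ∑ s, (if s = s0 then ψ s0 else 0) := by
              refine Finset.sum_congr rfl fun s _ => ?_
              rcases eq_or_ne s s0 with rfl | hne
              · simp
              · simp [hne]
          _ = ψ s0 := by simp
      rw [hsum1, map_zero, sub_zero]
  -- transfer
  obtain ⟨x, hx⟩ := transfer' ψ arows yrows rrows hwitness hε1
  have hxnet : ∀ p : tn, ‖(∑ s, fs s (xa p) • x s) - T (xa p)‖ < d + ε1 := by
    intro p
    have := hx (Sum.inl p)
    simpa only [harows, hyrows, hrrows, Sum.elim_inl] using this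
  have hxb : ∀ s0, ‖x s0‖ < ‖ψ s0‖ + ε1 := by
    intro s0
    have hthis := hx (Sum.inr s0)
    simp only [harows, hyrows, hrrows, Sum.elim_inr, sub_zero] at hthis
    have hsum1 : (∑ s, (if s = s0 then (1:𝕜) else 0) • x s) = x s0 := by
      calc (∑ s, (if s = s0 then (1:𝕜) else 0) • x s)
          = ∑ s, (if s = s0 then x s0 else 0) := by
            refine Finset.sum_congr rfl fun s _ => ?_
            rcases eq_or_ne s s0 with rfl | hne
            · simp
            · simp [hne]
        _ = x s0 := by simp
    rwa [hsum1] at hthis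
  -- the operator B
  set B : X →L[𝕜] X := ∑ s, (fs s).smulRight (x s) with hB
  have hBz : ∀ z, B z = ∑ s, fs s z • x s := by
    intro z
    rw [hB, ContinuousLinearMap.sum_apply]
    exact Finset.sum_congr rfl fun s _ => ContinuousLinearMap.smulRight_apply
  have hBfin : FiniteDimensional 𝕜 (LinearMap.range (B : X →ₗ[𝕜] X)) := by
    have hle : LinearMap.range (B : X →ₗ[𝕜] X) ≤ Submodule.span 𝕜 (Set.range x) := by
      rintro w ⟨z, rfl⟩
      show B z ∈ _
      rw [hBz]
      exact Submodule.sum_mem _ fun s _ =>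
        Submodule.smul_mem _ _ (Submodule.subset_span ⟨s, rfl⟩)
    haveI : FiniteDimensional 𝕜 (Submodule.span 𝕜 (Set.range x)) :=
      FiniteDimensional.span_of_finite 𝕜 (Set.finite_range x)
    exact Submodule.finiteDimensional_of_le hle
  refine ⟨B, hBfin, ?_⟩
  -- core estimate on the unit ball
  have core : ∀ z : X, ‖z‖ ≤ 1 → ‖T z - B z‖ ≤ 3*d + ε := by
    intro z hz1
    set az : Fin n → 𝕜 := fun s => fs s z with haz
    have hazA : az ∈ A :=
      ⟨z, by simpa [Metric.mem_closedBall, dist_zero_right] using hz1, rfl⟩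
    have hcov := htcover hazA
    rw [Set.mem_iUnion₂] at hcov
    obtain ⟨p, hpt, hpd⟩ := hcov
    set P : tn := ⟨p, hpt⟩ with hP
    have hpd' : dist az p < δ := hpd
    have hdists := (dist_pi_lt_iff hδ).mp hpd'
    have hcoef : ∀ s, ‖az s - fs s (xa P)‖ < δ := by
      intro s
      have h1 := hdists s
      have h2 : fs s (xa P) = p s := congrFun (hxa2 P) s
      rw [dist_eq_norm] at h1
      rw [h2]
      exact h1
    set u0 : StrongDual 𝕜 (StrongDual 𝕜 X) := J (T z) with hu0
    set u1 : StrongDual 𝕜 (StrongDual 𝕜 X) := ∑ s, az s • ψ s with hu1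
    set u2 : StrongDual 𝕜 (StrongDual 𝕜 X) := ∑ s, fs s (xa P) • ψ s with hu2
    set u3 : StrongDual 𝕜 (StrongDual 𝕜 X) := J (T (xa P)) with hu3
    set u4 : StrongDual 𝕜 (StrongDual 𝕜 X) := ∑ s, fs s (xa P) • J (x s) with hu4
    set u5 : StrongDual 𝕜 (StrongDual 𝕜 X) := ∑ s, az s • J (x s) with hu5
    have hTBnorm : ‖T z - B z‖ = ‖u0 - u5‖ := by
      have h1 : J (T z - B z) = u0 - u5 := by
        rw [J.map_sub]
        congr 1
        rw [hBz, map_sum J _ _]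
        refine Finset.sum_congr rfl fun s _ => ?_
        exact map_smul J _ _
      rw [← J.norm_map (T z - B z), h1]
    have hsplit : u0 - u5 = (u0 - u1) + (u1 - u2) + (u2 - u3) + (u3 - u4) + (u4 - u5) := by
      abel
    have h01 : ‖u0 - u1‖ ≤ d := by
      rw [norm_sub_rev]
      calc ‖u1 - u0‖ ≤ d * ‖z‖ := key z
        _ ≤ d := mul_le_of_le_one_right hd0 hz1
    have h12 : ‖u1 - u2‖ ≤ δ * Sψ := by
      have heq : u1 - u2 = ∑ s, (az s - fs s (xa P)) • ψ s := by
        rw [hu1, hu2, ← Finset.sum_sub_distrib]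
        exact Finset.sum_congr rfl fun s _ => (sub_smul _ _ _).symm
      rw [heq]
      calc ‖∑ s, (az s - fs s (xa P)) • ψ s‖ ≤ ∑ s, ‖(az s - fs s (xa P)) • ψ s‖ :=
            norm_sum_le _ _
        _ ≤ ∑ s, δ * ‖ψ s‖ := by
            refine Finset.sum_le_sum fun s _ => ?_
            rw [norm_smul]
            exact mul_le_mul_of_nonneg_right (hcoef s).le (norm_nonneg _)
        _ = δ * Sψ := by rw [hSψ, Finset.mul_sum]
    have h23 : ‖u2 - u3‖ ≤ d := by
      calc ‖u2 - u3‖ ≤ d * ‖xa P‖ := key (xa P)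
        _ ≤ d := mul_le_of_le_one_right hd0 (hxa1' P)
    have h34 : ‖u3 - u4‖ ≤ d + ε1 := by
      have heq : u3 - u4 = J (T (xa P) - ∑ s, fs s (xa P) • x s) := by
        rw [J.map_sub]
        congr 1
        rw [map_sum J _ _]
        exact Finset.sum_congr rfl fun s _ => (map_smul J _ _).symm
      rw [heq, J.norm_map, norm_sub_rev]
      exact (hxnet P).le
    have h45 : ‖u4 - u5‖ ≤ δ * (Sψ + n) := by
      have heq : u4 - u5 = ∑ s, (fs s (xa P) - az s) • J (x s) := by
        rw [hu4, hu5, ← Finset.sum_sub_distrib]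
        exact Finset.sum_congr rfl fun s _ => (sub_smul _ _ _).symm
      rw [heq]
      calc ‖∑ s, (fs s (xa P) - az s) • J (x s)‖
          ≤ ∑ s, ‖(fs s (xa P) - az s) • J (x s)‖ := norm_sum_le _ _
        _ ≤ ∑ s, δ * (‖ψ s‖ + 1) := by
            refine Finset.sum_le_sum fun s _ => ?_
            rw [norm_smul, J.norm_map]
            have hb1 : ‖fs s (xa P) - az s‖ ≤ δ := by
              rw [norm_sub_rev]; exact (hcoef s).le
            have hb2 : ‖x s‖ ≤ ‖ψ s‖ + 1 := by
              have := hxb s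
              linarith
            exact mul_le_mul hb1 hb2 (norm_nonneg _) hδ.le
        _ = δ * (Sψ + n) := by
            rw [show (∑ s : Fin n, δ * (‖ψ s‖ + 1))
                = (∑ s : Fin n, δ * ‖ψ s‖) + (∑ _s : Fin n, δ) from by
              rw [← Finset.sum_add_distrib]
              exact Finset.sum_congr rfl fun s _ => by ring]
            rw [Finset.sum_const, Finset.card_univ, Fintype.card_fin, ← Finset.mul_sum,
              ← hSψ, nsmul_eq_mul]
            ring
    have hδbound : δ * (2*Sψ + n) ≤ ε1 := by
      rw [hδdef, div_mul_eq_mul_div, div_le_iff₀ hden]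
      exact mul_le_mul_of_nonneg_left (lt_add_one _).le hε1.le
    calc ‖T z - B z‖ = ‖u0 - u5‖ := hTBnorm
      _ = ‖(u0 - u1) + (u1 - u2) + (u2 - u3) + (u3 - u4) + (u4 - u5)‖ := by rw [← hsplit]
      _ ≤ ‖(u0 - u1) + (u1 - u2) + (u2 - u3) + (u3 - u4)‖ + ‖u4 - u5‖ := norm_add_le _ _
      _ ≤ ‖(u0 - u1) + (u1 - u2) + (u2 - u3)‖ + ‖u3 - u4‖ + ‖u4 - u5‖ := by
          have := norm_add_le ((u0 - u1) + (u1 - u2) + (u2 - u3)) (u3 - u4)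
          linarith
      _ ≤ ‖(u0 - u1) + (u1 - u2)‖ + ‖u2 - u3‖ + ‖u3 - u4‖ + ‖u4 - u5‖ := by
          have := norm_add_le ((u0 - u1) + (u1 - u2)) (u2 - u3)
          linarith
      _ ≤ ‖u0 - u1‖ + ‖u1 - u2‖ + ‖u2 - u3‖ + ‖u3 - u4‖ + ‖u4 - u5‖ := by
          have := norm_add_le (u0 - u1) (u1 - u2)
          linarith
      _ ≤ d + δ * Sψ + d + (d + ε1) + δ * (Sψ + n) := by linarith
      _ = 3*d + ε1 + δ * (2*Sψ + n) := by ring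
      _ ≤ 3*d + ε1 + ε1 := by linarith
      _ ≤ 3*d + ε := by linarith
  -- conclude with the operator norm bound
  refine ContinuousLinearMap.opNorm_le_bound _
    (add_nonneg (mul_nonneg (by norm_num) hd0) hε.le) (fun z => ?_)
  rcases eq_or_ne z 0 with rfl | hz0
  · simp
  · have hzn : 0 < ‖z‖ := norm_pos_iff.2 hz0
    set c : 𝕜 := (‖z‖ : 𝕜) with hc
    have hc0 : c ≠ 0 := by
      rw [hc]
      simpa using hzn.ne'
    set z' : X := c⁻¹ • z with hz'
    have hz'1 : ‖z'‖ ≤ 1 := by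
      rw [hz', norm_smul, norm_inv, hc, RCLike.norm_ofReal, abs_of_nonneg hzn.le]
      exact le_of_eq (inv_mul_cancel₀ hzn.ne')
    have hzz : z = c • z' := (smul_inv_smul₀ hc0 z).symm
    calc ‖(T - B) z‖ = ‖(T - B) (c • z')‖ := by rw [← hzz]
      _ = ‖c • (T - B) z'‖ := by rw [map_smul]
      _ = ‖z‖ * ‖(T - B) z'‖ := by
          rw [norm_smul, hc, RCLike.norm_ofReal, abs_of_nonneg hzn.le]
      _ ≤ ‖z‖ * (3*d + ε) := by
          refine mul_le_mul_of_nonneg_left ?_ hzn.le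
          have := core z' hz'1
          simpa [ContinuousLinearMap.sub_apply] using this
      _ = (3*d + ε) * ‖z‖ := mul_comm _ _

end Main

/-- The distance from `T` to the finite-rank operators on `X` is at most three times the
distance from the Banach-space adjoint `T*` to the finite-rank operators on `X*`. -/
theorem dist_finiteRank_le_three_mul_dist_adjoint {𝕜 X : Type*} [RCLike 𝕜]
    [NormedAddCommGroup X] [NormedSpace 𝕜 X] [CompleteSpace X]
    (T : X →L[𝕜] X) :
    sInf { r : ℝ | ∃ B : X →L[𝕜] X,
        FiniteDimensional 𝕜 (LinearMap.range (B : X →ₗ[𝕜] X)) ∧ r = ‖T - B‖ } ≤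
      3 * sInf { r : ℝ | ∃ C : (X →L[𝕜] 𝕜) →L[𝕜] (X →L[𝕜] 𝕜),
        FiniteDimensional 𝕜 (LinearMap.range (C : (X →L[𝕜] 𝕜) →ₗ[𝕜] (X →L[𝕜] 𝕜))) ∧
        r = ‖(ContinuousLinearMap.compL 𝕜 X X 𝕜).flip T - C‖ } := by
  classical
  set SB := { r : ℝ | ∃ B : X →L[𝕜] X,
      FiniteDimensional 𝕜 (LinearMap.range (B : X →ₗ[𝕜] X)) ∧ r = ‖T - B‖ } with hSB
  set SC := { r : ℝ | ∃ C : (X →L[𝕜] 𝕜) →L[𝕜] (X →L[𝕜] 𝕜),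
      FiniteDimensional 𝕜 (LinearMap.range (C : (X →L[𝕜] 𝕜) →ₗ[𝕜] (X →L[𝕜] 𝕜))) ∧
      r = ‖(ContinuousLinearMap.compL 𝕜 X X 𝕜).flip T - C‖ } with hSC
  have hfin0 : FiniteDimensional 𝕜 (LinearMap.range ((0 : X →L[𝕜] X) : X →ₗ[𝕜] X)) := by
    rw [ContinuousLinearMap.coe_zero, LinearMap.range_zero]
    infer_instance
  have hfin0' : FiniteDimensional 𝕜
      (LinearMap.range ((0 : (X →L[𝕜] 𝕜) →L[𝕜] (X →L[𝕜] 𝕜)) :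
        (X →L[𝕜] 𝕜) →ₗ[𝕜] (X →L[𝕜] 𝕜))) := by
    rw [ContinuousLinearMap.coe_zero, LinearMap.range_zero]
    infer_instance
  have hSBne : SB.Nonempty := ⟨‖T - 0‖, 0, hfin0, rfl⟩
  have hSCne : SC.Nonempty := ⟨_, 0, hfin0', rfl⟩
  have hSBbd : BddBelow SB := ⟨0, by rintro r ⟨B, _, rfl⟩; exact norm_nonneg _⟩
  have hSCbd : BddBelow SC := ⟨0, by rintro r ⟨Cc, _, rfl⟩; exact norm_nonneg _⟩
  refine le_of_forall_pos_le_add (fun η hη => ?_)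
  obtain ⟨r, hrSC, hrlt⟩ := (csInf_lt_iff hSCbd hSCne).mp
    (lt_add_of_pos_right (sInf SC) (show (0:ℝ) < η/4 by linarith))
  obtain ⟨Cc, hCfin, rfl⟩ := hrSC
  obtain ⟨B, hBfin, hBle⟩ := main_approx T Cc hCfin (show (0:ℝ) < η/4 by linarith)
  have h1 : sInf SB ≤ ‖T - B‖ := csInf_le hSBbd ⟨B, hBfin, rfl⟩
  linarith
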